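/- arXiv:1404.6432 — 4 statements merged into one kernel-verified Lean document; each statement's English description precedes it below -/
import Mathlib

section
/- Let (a_ℓ)_{ℓ≥0} be a sequence of real numbers with a₀ = 1 and a_{ℓ+1} = a₁·a_ℓ − a_{ℓ−1} for all ℓ ≥ 1. Let 0 < x < 1 be a real number such that Σ_{ℓ≥0} a_ℓ²·x^ℓ converges. Then Σ_{ℓ≥0} a_ℓ·a_{ℓ+1}·x^ℓ converges absolutely and (1 + x) · Σ_{ℓ≥0} a_ℓ·a_{ℓ+1}·x^ℓ = a₁ · Σ_{ℓ≥0} a_ℓ²·x^ℓ. -/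
set_option maxHeartbeats 1000000 in
/-- Hecke-recurrence identity: `(1+x) Σ aₗ aₗ₊₁ xˡ = a₁ Σ aₗ² xˡ`. -/
theorem stmt_4 (a : ℕ → ℝ) (h0 : a 0 = 1)
    (hrec : ∀ ℓ : ℕ, 1 ≤ ℓ → a (ℓ+1) = a 1 * a ℓ - a (ℓ-1))
    (x : ℝ) (hx0 : 0 < x) (hx1 : x < 1)
    (hsum : Summable (fun ℓ : ℕ => (a ℓ)^2 * x^ℓ)) :
    Summable (fun ℓ : ℕ => |a ℓ * a (ℓ+1) * x^ℓ|)
      ∧ (1 + x) * (∑' ℓ : ℕ, a ℓ * a (ℓ+1) * x^ℓ)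
          = a 1 * (∑' ℓ : ℕ, (a ℓ)^2 * x^ℓ) := by
  -- shifted squares are summable
  have hshift : Summable (fun ℓ : ℕ => (a (ℓ+1))^2 * x^(ℓ+1)) :=
    (summable_nat_add_iff 1).2 hsum
  have hshift' : Summable (fun ℓ : ℕ => (a (ℓ+1))^2 * x^ℓ) := by
    have := hshift.mul_left x⁻¹
    refine this.congr fun ℓ => ?_
    field_simp [pow_succ]
    ring
  have habs : Summable (fun ℓ : ℕ => |a ℓ * a (ℓ+1) * x^ℓ|) := by
    refine Summable.of_nonneg_of_le (fun ℓ => abs_nonneg _)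
      (fun ℓ => ?_) ((hsum.add hshift').mul_left (1/2 : ℝ))
    have hxpow : (0:ℝ) ≤ x^ℓ := le_of_lt (pow_pos hx0 ℓ)
    have : |a ℓ * a (ℓ+1) * x^ℓ| = |a ℓ| * |a (ℓ+1)| * x^ℓ := by
      rw [abs_mul, abs_mul, abs_of_nonneg hxpow]
    rw [this]
    have hb : |a ℓ| * |a (ℓ+1)| ≤ 1/2 * ((a ℓ)^2 + (a (ℓ+1))^2) := by
      nlinarith [sq_nonneg (|a ℓ| - |a (ℓ+1)|), sq_abs (a ℓ), sq_abs (a (ℓ+1))]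
    calc |a ℓ| * |a (ℓ+1)| * x^ℓ
        ≤ 1/2 * ((a ℓ)^2 + (a (ℓ+1))^2) * x^ℓ :=
          mul_le_mul_of_nonneg_right hb hxpow
      _ = 1/2 * ((a ℓ)^2 * x^ℓ + (a (ℓ+1))^2 * x^ℓ) := by ring
  refine ⟨habs, ?_⟩
  have hf : Summable (fun ℓ : ℕ => a ℓ * a (ℓ+1) * x^ℓ) := habs.of_abs
  set f : ℕ → ℝ := fun ℓ => a ℓ * a (ℓ+1) * x^ℓ with hfdef
  set g : ℕ → ℝ := fun ℓ => (a ℓ)^2 * x^ℓ with hgdef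
  -- h ℓ := a 1 * g ℓ - f ℓ
  have hh : Summable (fun ℓ => a 1 * g ℓ - f ℓ) := (hsum.mul_left (a 1)).sub hf
  have hkey : ∀ ℓ : ℕ, a 1 * g (ℓ+1) - f (ℓ+1) = x * f ℓ := by
    intro ℓ
    have h := hrec (ℓ+1) (Nat.le_add_left 1 ℓ)
    simp only [Nat.add_sub_cancel] at h
    simp only [hfdef, hgdef]
    rw [show a (ℓ+1+1) = a 1 * a (ℓ+1) - a ℓ from h]
    ring
  have h0' : a 1 * g 0 - f 0 = 0 := by simp [hfdef, hgdef, h0]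
  have := Summable.tsum_eq_zero_add hh
  rw [h0', zero_add] at this
  have hright : ∑' ℓ : ℕ, (a 1 * g (ℓ+1) - f (ℓ+1)) = x * ∑' ℓ : ℕ, f ℓ := by
    rw [tsum_congr hkey, tsum_mul_left]
  rw [hright] at this
  have hsplit : ∑' ℓ : ℕ, (a 1 * g ℓ - f ℓ)
      = a 1 * (∑' ℓ, g ℓ) - ∑' ℓ, f ℓ := by
    rw [Summable.tsum_sub (hsum.mul_left (a 1)) hf, tsum_mul_left]
  rw [hsplit] at this
  linarith [this]
end

section
/- Let (a_ℓ)_{ℓ≥0} be a sequence of real numbers with a₀ = 1 and a_{ℓ+1} = a₁·a_ℓ − a_{ℓ−1} for all ℓ ≥ 1 (so that a₂ = a₁² − 1). Let 0 < x < 1 be a real number such that Σ_{ℓ≥0} a_ℓ²·x^ℓ converges. Then Σ_{ℓ≥0} a_ℓ·a_{ℓ+2}·x^ℓ converges absolutely and (1 + x) · Σ_{ℓ≥0} a_ℓ·a_{ℓ+2}·x^ℓ = (a₂ − x) · Σ_{ℓ≥0} a_ℓ²·x^ℓ. -/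
set_option maxHeartbeats 1000000


/-- Hecke-recurrence identity: `(1+x) Σ aₗ aₗ₊₂ xˡ = (a₂ − x) Σ aₗ² xˡ`. -/
theorem stmt_5 (a : ℕ → ℝ) (h0 : a 0 = 1)
    (hrec : ∀ ℓ : ℕ, 1 ≤ ℓ → a (ℓ+1) = a 1 * a ℓ - a (ℓ-1))
    (x : ℝ) (hx0 : 0 < x) (hx1 : x < 1)
    (hsum : Summable (fun ℓ : ℕ => (a ℓ)^2 * x^ℓ)) :
    Summable (fun ℓ : ℕ => |a ℓ * a (ℓ+2) * x^ℓ|)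
      ∧ (1 + x) * (∑' ℓ : ℕ, a ℓ * a (ℓ+2) * x^ℓ)
          = (a 2 - x) * (∑' ℓ : ℕ, (a ℓ)^2 * x^ℓ) := by
  have hxne : x ≠ 0 := ne_of_gt hx0
  have ha2 : a 2 = a 1 ^ 2 - 1 := by
    have := hrec 1 le_rfl
    simp [h0] at this
    rw [show (2:ℕ) = 1+1 by rfl, this]; ring
  have hrec' : ∀ ℓ : ℕ, a (ℓ+2) = a 1 * a (ℓ+1) - a ℓ := by
    intro ℓ
    have := hrec (ℓ+1) (Nat.le_add_left 1 ℓ)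
    simpa using this
  -- shifted summability
  have hS1 : Summable (fun ℓ : ℕ => (a (ℓ+1))^2 * x^(ℓ+1)) :=
    (summable_nat_add_iff 1).mpr hsum
  have hS0 : Summable (fun ℓ : ℕ => (a (ℓ+1))^2 * x^ℓ) := by
    refine (hS1.div_const x).congr fun ℓ => ?_
    field_simp
    ring
  -- summability of the "U" series
  have hmaj : Summable (fun ℓ : ℕ => ((a ℓ)^2 * x^ℓ + (a (ℓ+1))^2 * x^ℓ) / 2) :=
    (hsum.add hS0).div_const 2
  have hbound : ∀ ℓ : ℕ, |a ℓ * a (ℓ+1) * x^ℓ| ≤ ((a ℓ)^2 * x^ℓ + (a (ℓ+1))^2 * x^ℓ) / 2 := by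
    intro ℓ
    have hxp : (0:ℝ) ≤ x^ℓ := le_of_lt (pow_pos hx0 ℓ)
    have h1 : |a ℓ * a (ℓ+1) * x^ℓ| = |a ℓ| * |a (ℓ+1)| * x^ℓ := by
      rw [abs_mul, abs_mul, abs_of_nonneg hxp]
    rw [h1]
    have h2 : |a ℓ| * |a (ℓ+1)| ≤ ((a ℓ)^2 + (a (ℓ+1))^2) / 2 := by
      nlinarith [sq_nonneg (|a ℓ| - |a (ℓ+1)|), sq_abs (a ℓ), sq_abs (a (ℓ+1))]
    calc |a ℓ| * |a (ℓ+1)| * x^ℓ ≤ ((a ℓ)^2 + (a (ℓ+1))^2) / 2 * x^ℓ := by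
          exact mul_le_mul_of_nonneg_right h2 hxp
      _ = ((a ℓ)^2 * x^ℓ + (a (ℓ+1))^2 * x^ℓ) / 2 := by ring
  have hUabs : Summable (fun ℓ : ℕ => |a ℓ * a (ℓ+1) * x^ℓ|) :=
    Summable.of_nonneg_of_le (fun ℓ => abs_nonneg _) hbound hmaj
  have hU : Summable (fun ℓ : ℕ => a ℓ * a (ℓ+1) * x^ℓ) := hUabs.of_abs
  -- summability of the "T" series
  have hT : Summable (fun ℓ : ℕ => a ℓ * a (ℓ+2) * x^ℓ) := by
    refine ((hU.mul_left (a 1)).sub hsum).congr fun ℓ => ?_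
    rw [hrec' ℓ]; ring
  have hTabs : Summable (fun ℓ : ℕ => |a ℓ * a (ℓ+2) * x^ℓ|) :=
    summable_abs_iff.mpr hT
  refine ⟨hTabs, ?_⟩
  set S := ∑' ℓ : ℕ, (a ℓ)^2 * x^ℓ with hSdef
  set U := ∑' ℓ : ℕ, a ℓ * a (ℓ+1) * x^ℓ with hUdef
  -- S = 1 + shifted S
  have hSsplit : S = 1 + ∑' ℓ : ℕ, (a (ℓ+1))^2 * x^(ℓ+1) := by
    rw [hSdef, Summable.tsum_eq_zero_add hsum, h0]; norm_num
  -- U = a 1 + shifted U, and shifted U = a1 * (S - 1) - x * U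
  have hUsplit : U = a 1 + ∑' ℓ : ℕ, a (ℓ+1) * a (ℓ+2) * x^(ℓ+1) := by
    rw [hUdef, Summable.tsum_eq_zero_add hU, h0]; norm_num
  have hU1 : Summable (fun ℓ : ℕ => a (ℓ+1) * a (ℓ+2) * x^(ℓ+1)) :=
    (summable_nat_add_iff 1).mpr hU
  have hshift : (∑' ℓ : ℕ, a (ℓ+1) * a (ℓ+2) * x^(ℓ+1))
      = a 1 * (∑' ℓ : ℕ, (a (ℓ+1))^2 * x^(ℓ+1)) - x * U := by
    have heq : ∀ ℓ : ℕ, a (ℓ+1) * a (ℓ+2) * x^(ℓ+1)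
        = a 1 * ((a (ℓ+1))^2 * x^(ℓ+1)) - x * (a ℓ * a (ℓ+1) * x^ℓ) := by
      intro ℓ
      rw [hrec' ℓ]; ring
    calc (∑' ℓ : ℕ, a (ℓ+1) * a (ℓ+2) * x^(ℓ+1))
        = ∑' ℓ : ℕ, (a 1 * ((a (ℓ+1))^2 * x^(ℓ+1)) - x * (a ℓ * a (ℓ+1) * x^ℓ)) :=
          tsum_congr heq
      _ = a 1 * (∑' ℓ : ℕ, (a (ℓ+1))^2 * x^(ℓ+1)) - x * U := by
          rw [Summable.tsum_sub (hS1.mul_left _) (hU.mul_left _), tsum_mul_left, tsum_mul_left]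
  have hUeq : (1 + x) * U = a 1 * S := by
    have h1 : ∑' ℓ : ℕ, (a (ℓ+1))^2 * x^(ℓ+1) = S - 1 := by
      rw [hSsplit]; ring
    have h2 : U = a 1 + (a 1 * (S - 1) - x * U) := by
      conv_lhs => rw [hUsplit]
      rw [hshift, h1]
    linarith
  have hTeq : (∑' ℓ : ℕ, a ℓ * a (ℓ+2) * x^ℓ) = a 1 * U - S := by
    calc (∑' ℓ : ℕ, a ℓ * a (ℓ+2) * x^ℓ)
        = ∑' ℓ : ℕ, (a 1 * (a ℓ * a (ℓ+1) * x^ℓ) - (a ℓ)^2 * x^ℓ) := by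
          refine tsum_congr fun ℓ => ?_
          rw [hrec' ℓ]; ring
      _ = a 1 * U - S := by
          rw [Summable.tsum_sub (hU.mul_left _) hsum, tsum_mul_left]
  rw [hTeq, ha2]
  linear_combination (a 1) * hUeq
end

section
/- Let 0 < r₁ < r₂ be real numbers and let ρ > r₁ + r₂. Let a, b, x ∈ ℂ, let H be analytic on the disc {s ∈ ℂ : |s| < ρ}, and define F(s) = (a/2)/s + b/2 + s·H(s) for 0 < |s| < ρ. Then −(1/(2πi))² · ∮_{|z₁|=r₁} ∮_{|z₂|=r₂} F(z₁ − z₂) · ((z₂ − z₁)²/(z₁²·z₂²)) · e^{(x/2)(z₁ − z₂)} dz₂ dz₁ = (a/2)·x + b. -/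
open Complex Metric

lemma circleIntegral_div_sq {R : ℝ} (hR : 0 < R) {g : ℂ → ℂ}
    (hg : DifferentiableOn ℂ g (closedBall 0 R)) :
    (∮ z in C(0, R), g z / z ^ 2) = (2 * Real.pi * I) * deriv g 0 := by
  lift R to NNReal using hR.le with R'
  have hR' : 0 < R' := by exact_mod_cast hR
  have h := (hg.hasFPowerSeriesOnBall hR').hasFPowerSeriesAt
  have hd := h.deriv
  rw [cauchyPowerSeries_apply g 0 R' 1 1] at hd
  simp only [sub_zero, pow_one, smul_eq_mul] at hd
  have hEq : (∮ z in C(0, (R':ℝ)), 1 / z * (z⁻¹ * g z)) = ∮ z in C(0, (R':ℝ)), g z / z ^ 2 := by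
    refine circleIntegral.integral_congr (le_of_lt hR) fun z _ => ?_
    simp [div_eq_mul_inv, pow_two, mul_inv]; ring
  rw [hEq] at hd
  have h2πI : (2 * (Real.pi : ℂ) * I) ≠ 0 := by
    simp [Real.pi_ne_zero, I_ne_zero]
  field_simp at hd ⊢
  rw [← hd]

/-- The double contour integral computing the polynomial `P₁` of the CFKRS
moment conjecture for degree-two `L`-functions. -/
theorem stmt_12 (r₁ r₂ ρ : ℝ) (hr₁ : 0 < r₁) (hr₁₂ : r₁ < r₂) (hρ : r₁ + r₂ < ρ)
    (a b x : ℂ) (H : ℂ → ℂ) (hH : DifferentiableOn ℂ H (Metric.ball 0 ρ))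
    (F : ℂ → ℂ)
    (hF : ∀ s : ℂ, 0 < ‖s‖ → ‖s‖ < ρ →
      F s = (a/2)/s + b/2 + s * H s) :
    -(1/(2*Real.pi*I))^2 *
        (∮ z₁ in C(0, r₁), ∮ z₂ in C(0, r₂),
          F (z₁ - z₂) * ((z₂ - z₁)^2/(z₁^2 * z₂^2)) * Complex.exp ((x/2)*(z₁ - z₂)))
      = (a/2) * x + b := by
  have hr₂ : 0 < r₂ := hr₁.trans hr₁₂
  have hρ0 : 0 < ρ := by linarith
  set g : ℂ → ℂ := fun s => ((a/2)*s + (b/2)*s^2 + s^3 * H s) * Complex.exp ((x/2)*s)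
    with hgdef
  set D : ℂ → ℂ := fun s => (a/2 + b*s + (3*s^2*H s + s^3 * deriv H s)) * Complex.exp ((x/2)*s)
      + ((a/2)*s + (b/2)*s^2 + s^3 * H s) * ((x/2) * Complex.exp ((x/2)*s)) with hDdef
  have hHa : AnalyticOnNhd ℂ H (ball 0 ρ) := hH.analyticOnNhd isOpen_ball
  have hdH : DifferentiableOn ℂ (deriv H) (ball 0 ρ) :=
    (hHa.deriv).differentiableOn
  have hH' : ∀ s ∈ ball (0:ℂ) ρ, HasDerivAt H (deriv H s) s := fun s hs =>
    (hH.differentiableAt (isOpen_ball.mem_nhds hs)).hasDerivAt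
  have hE' : ∀ s : ℂ, HasDerivAt (fun s : ℂ => Complex.exp ((x/2)*s))
      ((x/2) * Complex.exp ((x/2)*s)) s := by
    intro s
    have := ((hasDerivAt_id s).const_mul (x/2)).cexp
    simpa [mul_comm] using this
  have hgD : ∀ s ∈ ball (0:ℂ) ρ, HasDerivAt g (D s) s := by
    intro s hs
    have h1 : HasDerivAt (fun s : ℂ => (a/2)*s + (b/2)*s^2 + s^3*H s)
        (a/2 + b*s + (3*s^2*H s + s^3*deriv H s)) s := by
      have := (((hasDerivAt_id s).const_mul (a/2)).add
        (((hasDerivAt_pow 2 s).const_mul (b/2)).add ((hasDerivAt_pow 3 s).mul (hH' s hs))))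
      refine HasDerivAt.congr_of_eventuallyEq (this.congr_deriv ?_) (Filter.Eventually.of_forall fun y => ?_)
      · push_cast; ring
      · simp only [Pi.add_apply, Pi.mul_apply, id_eq]; ring
    exact (h1.mul (hE' s))
  -- differentiability of `g` and `D` on the ball
  have hgdiff : DifferentiableOn ℂ g (ball 0 ρ) := fun s hs =>
    ((hgD s hs).differentiableAt.differentiableWithinAt)
  have hDdiff : DifferentiableOn ℂ D (ball 0 ρ) := by
    have hexp : DifferentiableOn ℂ (fun s : ℂ => Complex.exp ((x/2)*s)) (ball 0 ρ) :=
      (Differentiable.differentiableOn (by fun_prop))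
    apply DifferentiableOn.add
    · exact (((differentiableOn_const _).add ((differentiableOn_id).const_mul b)).add
        ((((differentiableOn_id.pow 2).const_mul 3).mul hH).add
          ((differentiableOn_id.pow 3).mul hdH))).mul hexp
    · exact (((differentiableOn_id.const_mul _).add
        ((differentiableOn_id.pow 2).const_mul _)).add
        ((differentiableOn_id.pow 3).mul hH)).mul (hexp.const_mul _)
  -- inner integral
  have inner_eq : ∀ z₁ ∈ sphere (0:ℂ) r₁,
      (∮ z₂ in C(0, r₂),
          F (z₁ - z₂) * ((z₂ - z₁)^2/(z₁^2 * z₂^2)) * Complex.exp ((x/2)*(z₁ - z₂)))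
        = (2*Real.pi*I) * (-(D z₁) / z₁^2) := by
    intro z₁ hz₁
    have hn₁ : ‖z₁‖ = r₁ := by simpa using hz₁
    have hz₁0 : z₁ ≠ 0 := by
      intro h; rw [h] at hn₁; simp at hn₁; linarith
    have hz₁mem : z₁ ∈ ball (0:ℂ) ρ := by
      simp only [mem_ball, dist_zero_right, hn₁]; linarith
    have hcong : (∮ z₂ in C(0, r₂),
          F (z₁ - z₂) * ((z₂ - z₁)^2/(z₁^2 * z₂^2)) * Complex.exp ((x/2)*(z₁ - z₂)))
        = ∮ z₂ in C(0, r₂), (g (z₁ - z₂) / z₁^2) / z₂^2 := by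
      refine circleIntegral.integral_congr hr₂.le fun z₂ hz₂ => ?_
      have hn₂ : ‖z₂‖ = r₂ := by simpa using hz₂
      have hz₂0 : z₂ ≠ 0 := by
        intro h; rw [h] at hn₂; simp at hn₂; linarith
      have hlow : r₂ - r₁ ≤ ‖z₁ - z₂‖ := by
        calc r₂ - r₁ = ‖z₂‖ - ‖z₁‖ := by rw [hn₁, hn₂]
          _ ≤ ‖z₂ - z₁‖ := norm_sub_norm_le _ _
          _ = ‖z₁ - z₂‖ := norm_sub_rev _ _
      have hup : ‖z₁ - z₂‖ < ρ := by
        calc ‖z₁ - z₂‖ ≤ ‖z₁‖ + ‖z₂‖ := norm_sub_le _ _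
          _ = r₁ + r₂ := by rw [hn₁, hn₂]
          _ < ρ := hρ
      have h1 : 0 < ‖z₁ - z₂‖ := by
        linarith
      have h2 : ‖z₁ - z₂‖ < ρ := by exact hup
      have hs0 : z₁ - z₂ ≠ 0 := by
        intro h; rw [h] at h1; simp at h1
      rw [hF _ h1 h2, hgdef]
      field_simp
      ring
    rw [hcong]
    have hginner : HasDerivAt (fun z₂ : ℂ => g (z₁ - z₂) / z₁^2) (-(D z₁)/z₁^2) 0 := by
      have h0 : HasDerivAt (fun z₂ : ℂ => z₁ - z₂) (-1) 0 := by
        simpa using (hasDerivAt_id (0:ℂ)).const_sub z₁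
      have hgz : HasDerivAt g (D z₁) ((fun z₂ : ℂ => z₁ - z₂) 0) := by
        simpa using hgD z₁ hz₁mem
      have hc := (hgz.comp 0 h0 :
        HasDerivAt ((fun w => g w) ∘ (fun z₂ : ℂ => z₁ - z₂)) (D z₁ * (-1)) 0)
      have := hc.div_const (z₁^2)
      simpa [neg_div] using this
    have hdiffinner : DifferentiableOn ℂ (fun z₂ : ℂ => g (z₁ - z₂) / z₁^2)
        (closedBall 0 r₂) := by
      apply DifferentiableOn.div_const
      apply hgdiff.comp ((differentiableOn_const z₁).sub differentiableOn_id)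
      intro z₂ hz₂
      simp only [mem_closedBall, dist_zero_right] at hz₂
      simp only [mem_ball, dist_zero_right]
      calc ‖z₁ - z₂‖ ≤ ‖z₁‖ + ‖z₂‖ := norm_sub_le _ _
        _ ≤ r₁ + r₂ := by rw [hn₁]; linarith
        _ < ρ := hρ
    rw [circleIntegral_div_sq hr₂ hdiffinner, hginner.deriv]
  -- outer integral
  have hout : (∮ z₁ in C(0, r₁), ∮ z₂ in C(0, r₂),
          F (z₁ - z₂) * ((z₂ - z₁)^2/(z₁^2 * z₂^2)) * Complex.exp ((x/2)*(z₁ - z₂)))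
      = ∮ z₁ in C(0, r₁), ((2*Real.pi*I) * (-(D z₁))) / z₁^2 := by
    refine circleIntegral.integral_congr hr₁.le fun z₁ hz₁ => ?_
    rw [inner_eq z₁ hz₁]; ring
  have hwdiff : DifferentiableOn ℂ (fun z : ℂ => (2*Real.pi*I) * (-(D z)))
      (closedBall 0 r₁) := by
    refine DifferentiableOn.const_mul ?_ _
    refine (hDdiff.mono ?_).neg
    intro z hz
    simp only [mem_closedBall, dist_zero_right] at hz
    simp only [mem_ball, dist_zero_right]
    linarith
  have h0mem : (0:ℂ) ∈ ball (0:ℂ) ρ := by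
    simp only [mem_ball, dist_self]; exact hρ0
  have hdH'0 : HasDerivAt (deriv H) (deriv (deriv H) 0) 0 :=
    ((hHa.deriv) 0 h0mem).differentiableAt.hasDerivAt
  have hD0 : HasDerivAt D ((a/2)*x + b) 0 := by
    have q1 : HasDerivAt (fun s : ℂ => a/2 + b*s + (3*s^2*H s + s^3*deriv H s)) b 0 := by
      have := ((hasDerivAt_const (0:ℂ) (a/2)).add ((hasDerivAt_id (0:ℂ)).const_mul b)).add
        (((((hasDerivAt_pow 2 (0:ℂ)).const_mul 3)).mul (hH' 0 h0mem)).add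
          ((hasDerivAt_pow 3 (0:ℂ)).mul hdH'0))
      refine this.congr_deriv ?_
      push_cast; norm_num
    have q3 : HasDerivAt (fun s : ℂ => (a/2)*s + (b/2)*s^2 + s^3*H s) (a/2) 0 := by
      have := (((hasDerivAt_id (0:ℂ)).const_mul (a/2)).add
        (((hasDerivAt_pow 2 (0:ℂ)).const_mul (b/2)).add
          ((hasDerivAt_pow 3 (0:ℂ)).mul (hH' 0 h0mem))))
      refine HasDerivAt.congr_of_eventuallyEq (this.congr_deriv ?_) (Filter.Eventually.of_forall fun y => ?_)
      · push_cast; norm_num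
      · simp only [Pi.add_apply, Pi.mul_apply, id_eq]; ring
    have q4 : HasDerivAt (fun s : ℂ => (x/2) * Complex.exp ((x/2)*s))
        ((x/2) * ((x/2) * Complex.exp ((x/2)*(0:ℂ)))) 0 := (hE' 0).const_mul (x/2)
    have := (q1.mul (hE' 0)).add (q3.mul q4)
    rw [hDdef]
    refine this.congr_deriv ?_
    simp only [mul_zero, Complex.exp_zero, mul_one, zero_pow, ne_eq, OfNat.ofNat_ne_zero,
      not_false_eq_true, zero_mul, mul_zero, add_zero, zero_add, one_mul]
    ring
  have hw : HasDerivAt (fun z : ℂ => (2*Real.pi*I) * (-(D z)))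
      ((2*Real.pi*I) * (-((a/2)*x + b))) 0 := hD0.neg.const_mul _
  rw [hout, circleIntegral_div_sq hr₁ hwdiff, hw.deriv]
  have h2πI : (2 * (Real.pi : ℂ) * I) ≠ 0 := by
    simp [Real.pi_ne_zero, I_ne_zero]
  field_simp
end

section
/- For every real δ > 0 there exists a constant C > 0 such that for all positive integers a and b and every real X ≥ 2, the sum over all pairs (m, n) of positive integers with a·m = b·n and m·n ≤ X of τ(m)·τ(n)/√(m·n) is at most C·(a·b·X)^δ / √(a′·b′), where a′ = a/gcd(a,b) and b′ = b/gcd(a,b). -/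
open Real Finset

lemma step1 {ε : ℝ} (hε : 0 < ε) :
    ∃ E : ℕ, 1 ≤ E ∧ ∀ e : ℕ, (e + 1 : ℝ) ≤ E * (2:ℝ) ^ ((e:ℝ) * ε) := by
  refine ⟨max ⌈2 / (ε * Real.log 2)⌉₊ 1, le_max_right _ _, fun e => ?_⟩
  set E := max ⌈2 / (ε * Real.log 2)⌉₊ 1 with hE
  have hlog2 : 0 < Real.log 2 := Real.log_pos (by norm_num)
  have hEge : 2 / (ε * Real.log 2) ≤ (E : ℝ) := le_trans (Nat.le_ceil _) (by exact_mod_cast Nat.cast_le.mpr (le_max_left _ _))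
  have hE1 : (1:ℝ) ≤ E := by exact_mod_cast le_max_right _ 1
  rcases Nat.eq_zero_or_pos e with rfl | he
  · simp only [Nat.cast_zero, zero_mul, Real.rpow_zero, mul_one, zero_add]
    linarith
  · have h1 : (e:ℝ) * ε * Real.log 2 ≤ (2:ℝ) ^ ((e:ℝ) * ε) := by
      rw [Real.rpow_def_of_pos (by norm_num)]
      calc (e:ℝ) * ε * Real.log 2 ≤ (Real.log 2 * ((e:ℝ) * ε)) + 1 := by ring_nf; linarith
        _ ≤ Real.exp (Real.log 2 * ((e:ℝ) * ε)) := by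
            linarith [Real.add_one_le_exp (Real.log 2 * ((e:ℝ) * ε))]
    have he1 : (1:ℝ) ≤ (e:ℝ) := by exact_mod_cast he
    have key : (2 / (ε * Real.log 2)) * ((e:ℝ) * ε * Real.log 2) = 2 * e := by
      field_simp
    have hpos : 0 < (e:ℝ) * ε * Real.log 2 := by positivity
    calc (e + 1 : ℝ) ≤ 2 * e := by linarith
      _ = (2 / (ε * Real.log 2)) * ((e:ℝ) * ε * Real.log 2) := key.symm
      _ ≤ (E:ℝ) * (2:ℝ) ^ ((e:ℝ) * ε) := by
          apply mul_le_mul hEge h1 (le_of_lt hpos) (by positivity)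

lemma divisor_bound {ε : ℝ} (hε : 0 < ε) :
    ∃ C : ℝ, 1 ≤ C ∧ ∀ n : ℕ, 1 ≤ n → ((n.divisors.card : ℝ)) ≤ C * (n:ℝ) ^ ε := by
  obtain ⟨E, hE1, hEe⟩ := step1 hε
  set T := ⌈(2:ℝ) ^ (1/ε)⌉₊ with hT
  have hE1R : (1:ℝ) ≤ (E:ℝ) := by exact_mod_cast hE1
  refine ⟨(E:ℝ) ^ (T+1), one_le_pow₀ hE1R, fun n hn => ?_⟩
  have hn0 : n ≠ 0 := by omega
  rw [Nat.card_divisors hn0]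
  have key : ∀ p ∈ n.primeFactors,
      ((n.factorization p : ℝ) + 1) ≤
        (if (p:ℝ) ^ ε < 2 then (E:ℝ) else 1) * (p:ℝ) ^ ((n.factorization p : ℝ) * ε) := by
    intro p hp
    have hpp : p.Prime := Nat.prime_of_mem_primeFactors hp
    have hp2 : (2:ℝ) ≤ (p:ℝ) := by exact_mod_cast hpp.two_le
    set e := n.factorization p
    by_cases hsmall : (p:ℝ) ^ ε < 2
    · rw [if_pos hsmall]
      have h2p : (2:ℝ) ^ ((e:ℝ) * ε) ≤ (p:ℝ) ^ ((e:ℝ) * ε) :=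
        Real.rpow_le_rpow (by norm_num) hp2 (by positivity)
      calc ((e:ℝ) + 1) ≤ E * (2:ℝ) ^ ((e:ℝ) * ε) := hEe e
        _ ≤ E * (p:ℝ) ^ ((e:ℝ) * ε) := by
            apply mul_le_mul_of_nonneg_left h2p (by positivity)
    · rw [if_neg hsmall, one_mul]
      push_neg at hsmall
      have hre : (p:ℝ) ^ ((e:ℝ) * ε) = ((p:ℝ) ^ ε) ^ e := by
        rw [← Real.rpow_natCast ((p:ℝ) ^ ε) e, ← Real.rpow_mul (by positivity), mul_comm]
      rw [hre]
      have h2e : (2:ℝ) ^ e ≤ ((p:ℝ) ^ ε) ^ e := pow_le_pow_left₀ (by norm_num) hsmall e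
      have hlt : (e + 1 : ℝ) ≤ (2:ℝ) ^ e := by
        exact_mod_cast Nat.succ_le_of_lt (Nat.lt_two_pow_self (n := e))
      linarith
  -- n^ε as a product
  have hn' : ∏ p ∈ n.primeFactors, p ^ n.factorization p = n := by
    rw [← Nat.support_factorization]
    exact Nat.factorization_prod_pow_eq_self hn0
  have hprod : (n:ℝ) ^ ε = ∏ p ∈ n.primeFactors, (p:ℝ) ^ ((n.factorization p : ℝ) * ε) := by
    have hnr : (n:ℝ) = ∏ p ∈ n.primeFactors, ((p:ℝ) ^ (n.factorization p : ℕ)) := by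
      exact_mod_cast hn'.symm
    calc (n:ℝ) ^ ε = (∏ p ∈ n.primeFactors, ((p:ℝ) ^ (n.factorization p : ℕ))) ^ ε := by
          rw [← hnr]
      _ = ∏ p ∈ n.primeFactors, ((p:ℝ) ^ (n.factorization p : ℕ)) ^ ε :=
          (Real.finset_prod_rpow _ _ (fun p _ => by positivity) ε).symm
      _ = ∏ p ∈ n.primeFactors, (p:ℝ) ^ ((n.factorization p : ℝ) * ε) := by
          refine Finset.prod_congr rfl fun p hp => ?_
          rw [← Real.rpow_natCast (p:ℝ) (n.factorization p), ← Real.rpow_mul (by positivity)]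
  classical
  have hBle : ∏ p ∈ n.primeFactors, (if (p:ℝ) ^ ε < 2 then (E:ℝ) else 1) ≤ (E:ℝ) ^ (T+1) := by
    rw [Finset.prod_ite, Finset.prod_const, Finset.prod_const, one_pow, mul_one]
    apply pow_le_pow_right₀ hE1R
    have hsub : (n.primeFactors.filter (fun p : ℕ => (p:ℝ) ^ ε < 2)) ⊆ (Finset.range (T+1) : Finset ℕ) := by
      intro p hp
      simp only [Finset.mem_filter] at hp
      rw [Finset.mem_range]
      by_contra hc
      push_neg at hc
      have hpT : ((2:ℝ) ^ (1/ε)) ≤ (p:ℝ) := by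
        calc ((2:ℝ) ^ (1/ε)) ≤ (T:ℝ) := Nat.le_ceil _
          _ ≤ (p:ℝ) := by exact_mod_cast Nat.le_of_succ_le hc
      have : (2:ℝ) ≤ (p:ℝ) ^ ε := by
        calc (2:ℝ) = ((2:ℝ) ^ (1/ε)) ^ ε := by
              rw [← Real.rpow_mul (by norm_num), one_div_mul_cancel hε.ne', Real.rpow_one]
          _ ≤ (p:ℝ) ^ ε := Real.rpow_le_rpow (by positivity) hpT hε.le
      linarith [hp.2]
    calc _ ≤ (Finset.range (T+1)).card := Finset.card_le_card hsub
      _ = T + 1 := Finset.card_range _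
  calc ((∏ p ∈ n.primeFactors, (n.factorization p + 1) : ℕ) : ℝ)
      = ∏ p ∈ n.primeFactors, ((n.factorization p : ℝ) + 1) := by push_cast; rfl
    _ ≤ ∏ p ∈ n.primeFactors,
          ((if (p:ℝ) ^ ε < 2 then (E:ℝ) else 1) * (p:ℝ) ^ ((n.factorization p : ℝ) * ε)) :=
        Finset.prod_le_prod (fun p _ => by positivity) key
    _ = (∏ p ∈ n.primeFactors, (if (p:ℝ) ^ ε < 2 then (E:ℝ) else 1)) *
          ∏ p ∈ n.primeFactors, (p:ℝ) ^ ((n.factorization p : ℝ) * ε) :=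
        Finset.prod_mul_distrib
    _ ≤ (E:ℝ) ^ (T+1) * (n:ℝ) ^ ε := by
        rw [← hprod]
        exact mul_le_mul_of_nonneg_right hBle (by positivity)

lemma tau_mul_le (m n : ℕ) :
    ((m * n).divisors.card) ≤ m.divisors.card * n.divisors.card := by
  rw [Nat.divisors_mul]; exact Finset.card_mul_le

lemma harm_sum_le (N : ℕ) : ∑ j ∈ Finset.Icc 1 N, (1:ℝ)/(j:ℝ) ≤ 1 + Real.log N := by
  have h := harmonic_le_one_add_log N
  have he : ((harmonic N : ℚ) : ℝ) = ∑ j ∈ Finset.Icc 1 N, (1:ℝ)/(j:ℝ) := by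
    rw [harmonic_eq_sum_Icc]
    push_cast
    simp [one_div]
  linarith [he ▸ h]

set_option maxHeartbeats 1000000 in
/-- Bound for the diagonal `am = bn` error term in the mollified second
moment. -/
theorem stmt_15 :
    ∀ δ > (0:ℝ), ∃ C > (0:ℝ), ∀ a b : ℕ, 1 ≤ a → 1 ≤ b → ∀ X : ℝ, 2 ≤ X →
      ∑ p ∈ (Finset.Icc 1 ⌊X⌋₊ ×ˢ Finset.Icc 1 ⌊X⌋₊).filter
          (fun p : ℕ × ℕ => a * p.1 = b * p.2 ∧ ((p.1 * p.2 : ℕ) : ℝ) ≤ X),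
          ((Nat.divisors p.1).card : ℝ) * ((Nat.divisors p.2).card : ℝ)
            / Real.sqrt ((p.1 : ℝ) * (p.2 : ℝ))
        ≤ C * ((a : ℝ) * (b : ℝ) * X) ^ δ
            / Real.sqrt (((a / Nat.gcd a b : ℕ) : ℝ) * ((b / Nat.gcd a b : ℕ) : ℝ)) := by
  intro δ hδ
  obtain ⟨C₀, hC₀1, hC₀⟩ := divisor_bound (show (0:ℝ) < δ/4 by linarith)
  have hC₀0 : (0:ℝ) < C₀ := lt_of_lt_of_le one_pos hC₀1
  refine ⟨C₀^2 * (1 + 2/δ), by positivity, fun a b ha hb X hX => ?_⟩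
  have hX0 : (0:ℝ) < X := by linarith
  have hX1 : (1:ℝ) ≤ X := by linarith
  set g := Nat.gcd a b with hgdef
  set a' := a / g with ha'def
  set b' := b / g with hb'def
  have hg : 0 < g := Nat.gcd_pos_of_pos_left _ (by omega)
  have hga : g * a' = a := Nat.mul_div_cancel' (Nat.gcd_dvd_left a b)
  have hgb : g * b' = b := Nat.mul_div_cancel' (Nat.gcd_dvd_right a b)
  have ha' : 0 < a' := by
    rcases Nat.eq_zero_or_pos a' with h | h
    · rw [h, mul_zero] at hga; omega
    · exact h
  have hb' : 0 < b' := by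
    rcases Nat.eq_zero_or_pos b' with h | h
    · rw [h, mul_zero] at hgb; omega
    · exact h
  have hcop : Nat.Coprime a' b' := Nat.coprime_div_gcd_div_gcd hg
  set S := (Finset.Icc 1 ⌊X⌋₊ ×ˢ Finset.Icc 1 ⌊X⌋₊).filter
      (fun p : ℕ × ℕ => a * p.1 = b * p.2 ∧ ((p.1 * p.2 : ℕ) : ℝ) ≤ X) with hS
  set k : ℕ × ℕ → ℕ := fun p => p.1 / b' with hk
  have hsab : (0:ℝ) < Real.sqrt ((a':ℝ) * (b':ℝ)) := by
    apply Real.sqrt_pos.mpr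
    have : (1:ℝ) ≤ (a':ℝ) * (b':ℝ) := by
      have : 1 ≤ a' * b' := Nat.one_le_iff_ne_zero.mpr (by positivity)
      exact_mod_cast this
    linarith
  -- structural facts about members of S
  have hfacts : ∀ p ∈ S, p.1 = b' * k p ∧ p.2 = a' * k p ∧ 1 ≤ k p ∧ k p ≤ ⌊X⌋₊ ∧
      ((p.1 * p.2 : ℕ) : ℝ) ≤ X := by
    intro p hp
    rw [hS, Finset.mem_filter, Finset.mem_product, Finset.mem_Icc, Finset.mem_Icc] at hp
    obtain ⟨⟨⟨h11, h12⟩, h21, h22⟩, hab, hle⟩ := hp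
    have hab' : a' * p.1 = b' * p.2 := by
      have : g * (a' * p.1) = g * (b' * p.2) := by
        rw [← mul_assoc, ← mul_assoc, hga, hgb]; exact hab
      exact Nat.eq_of_mul_eq_mul_left hg this
    have hdvd : b' ∣ p.1 := by
      have : b' ∣ a' * p.1 := ⟨p.2, hab'⟩
      exact (Nat.Coprime.dvd_of_dvd_mul_left hcop.symm this)
    have h1 : p.1 = b' * k p := by
      rw [hk]; exact (Nat.mul_div_cancel' hdvd).symm
    have h2 : p.2 = a' * k p := by
      have : b' * (a' * k p) = b' * p.2 := by
        rw [← hab', h1]; ring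
      exact (Nat.eq_of_mul_eq_mul_left hb' this).symm
    have hk1 : 1 ≤ k p := by
      rcases Nat.eq_zero_or_pos (k p) with h | h
      · rw [h, mul_zero] at h1; omega
      · exact h
    have hkX : k p ≤ ⌊X⌋₊ := by
      have : k p ≤ p.1 := by
        rw [h1]; exact Nat.le_mul_of_pos_left _ hb'
      omega
    exact ⟨h1, h2, hk1, hkX, hle⟩
  -- per-term bound
  set D := C₀^2 * X ^ (δ/4) / Real.sqrt ((a':ℝ) * (b':ℝ)) with hD
  have hD0 : 0 ≤ D := by positivity
  have hterm : ∀ p ∈ S,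
      ((Nat.divisors p.1).card : ℝ) * ((Nat.divisors p.2).card : ℝ)
        / Real.sqrt ((p.1 : ℝ) * (p.2 : ℝ)) ≤ D * (1 / (k p : ℝ)) := by
    intro p hp
    obtain ⟨h1, h2, hk1, hkX, hle⟩ := hfacts p hp
    have hp1 : 0 < p.1 := by rw [h1]; positivity
    have hp2 : 0 < p.2 := by rw [h2]; positivity
    have hkR : (1:ℝ) ≤ (k p : ℝ) := by exact_mod_cast hk1
    have hsqrt : Real.sqrt ((p.1 : ℝ) * (p.2 : ℝ))
        = Real.sqrt ((a':ℝ) * (b':ℝ)) * (k p : ℝ) := by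
      have : ((p.1 : ℝ) * (p.2 : ℝ)) = ((a':ℝ) * (b':ℝ)) * ((k p : ℝ))^2 := by
        rw [h1, h2]; push_cast; ring
      rw [this, Real.sqrt_mul (by positivity), Real.sqrt_sq (by positivity)]
    have hnum : ((Nat.divisors p.1).card : ℝ) * ((Nat.divisors p.2).card : ℝ)
        ≤ C₀^2 * X ^ (δ/4) := by
      have hb1 := hC₀ p.1 hp1
      have hb2 := hC₀ p.2 hp2
      calc ((Nat.divisors p.1).card : ℝ) * ((Nat.divisors p.2).card : ℝ)
          ≤ (C₀ * (p.1:ℝ) ^ (δ/4)) * (C₀ * (p.2:ℝ) ^ (δ/4)) := by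
            apply mul_le_mul hb1 hb2 (Nat.cast_nonneg _) (by positivity)
        _ = C₀^2 * ((p.1:ℝ) * (p.2:ℝ)) ^ (δ/4) := by
            rw [Real.mul_rpow (by positivity) (by positivity)]; ring
        _ ≤ C₀^2 * X ^ (δ/4) := by
            apply mul_le_mul_of_nonneg_left _ (by positivity)
            apply Real.rpow_le_rpow (by positivity) _ (by linarith)
            exact_mod_cast hle
    rw [hsqrt]
    have hkpos : (0:ℝ) < (k p : ℝ) := by linarith
    have hrw : D * (1 / (k p : ℝ))
        = (C₀^2 * X ^ (δ/4)) / (Real.sqrt ((a':ℝ) * (b':ℝ)) * (k p : ℝ)) := by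
      rw [hD]; field_simp
    rw [hrw]
    gcongr
  -- injectivity of k on S
  have hkinj : ∀ x ∈ S, ∀ y ∈ S, k x = k y → x = y := by
    intro x hx y hy hxy
    obtain ⟨hx1, _, _, _, _⟩ := hfacts x hx
    obtain ⟨hy1, _, _, _, _⟩ := hfacts y hy
    rw [hS, Finset.mem_filter] at hx hy
    have h1 : x.1 = y.1 := by rw [hx1, hy1, hxy]
    have h2 : x.2 = y.2 := by
      have hbx : b * x.2 = b * y.2 := by
        rw [← hx.2.1, ← hy.2.1, h1]
      exact Nat.eq_of_mul_eq_mul_left (by omega) hbx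
    exact Prod.ext h1 h2
  -- sum the harmonic tail
  have hsum : ∑ p ∈ S, (1:ℝ) / (k p : ℝ) ≤ 1 + Real.log X := by
    calc ∑ p ∈ S, (1:ℝ) / (k p : ℝ) = ∑ j ∈ S.image k, (1:ℝ) / (j:ℝ) :=
          (Finset.sum_image (f := fun j : ℕ => (1:ℝ)/(j:ℝ)) hkinj).symm
      _ ≤ ∑ j ∈ Finset.Icc 1 ⌊X⌋₊, (1:ℝ) / (j:ℝ) := by
          apply Finset.sum_le_sum_of_subset_of_nonneg
          · intro j hj
            obtain ⟨p, hp, rfl⟩ := Finset.mem_image.mp hj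
            obtain ⟨_, _, hk1, hkX, _⟩ := hfacts p hp
            exact Finset.mem_Icc.mpr ⟨hk1, hkX⟩
          · intro j _ _; positivity
      _ ≤ 1 + Real.log ⌊X⌋₊ := harm_sum_le _
      _ ≤ 1 + Real.log X := by
          have h1 : (1:ℝ) ≤ (⌊X⌋₊:ℝ) := by
            exact_mod_cast Nat.one_le_iff_ne_zero.mpr (by
              have : 1 ≤ ⌊X⌋₊ := Nat.le_floor (by exact_mod_cast hX1)
              omega)
          have := Real.log_le_log (by linarith) (Nat.floor_le hX0.le)
          linarith
  have hlog : 1 + Real.log X ≤ (1 + 2/δ) * X ^ (δ/2) := by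
    have h1 : Real.log X ≤ X ^ (δ/2) / (δ/2) := Real.log_le_rpow_div hX0.le (by linarith)
    have h2 : (1:ℝ) ≤ X ^ (δ/2) := Real.one_le_rpow hX1 (by linarith)
    have h3 : X ^ (δ/2) / (δ/2) = (2/δ) * X ^ (δ/2) := by
      field_simp
    rw [h3] at h1
    nlinarith
  -- put it together
  calc ∑ p ∈ S, ((Nat.divisors p.1).card : ℝ) * ((Nat.divisors p.2).card : ℝ)
          / Real.sqrt ((p.1 : ℝ) * (p.2 : ℝ))
      ≤ ∑ p ∈ S, D * (1 / (k p : ℝ)) := Finset.sum_le_sum hterm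
    _ = D * ∑ p ∈ S, (1:ℝ) / (k p : ℝ) := by rw [Finset.mul_sum]
    _ ≤ D * ((1 + 2/δ) * X ^ (δ/2)) := by
        apply mul_le_mul_of_nonneg_left (le_trans hsum hlog) hD0
    _ ≤ C₀^2 * (1 + 2/δ) * ((a:ℝ) * (b:ℝ) * X) ^ δ / Real.sqrt ((a':ℝ) * (b':ℝ)) := by
        rw [hD]
        rw [div_mul_eq_mul_div, div_le_div_iff₀ hsab hsab]
        have hXX : X ^ (δ/4) * X ^ (δ/2) = X ^ (3*δ/4) := by
          rw [← Real.rpow_add hX0]; norm_num; ring_nf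
        have hle1 : X ^ (3*δ/4) ≤ X ^ δ :=
          Real.rpow_le_rpow_of_exponent_le hX1 (by linarith)
        have hle2 : X ^ δ ≤ ((a:ℝ) * (b:ℝ) * X) ^ δ := by
          apply Real.rpow_le_rpow hX0.le _ hδ.le
          have haR : (1:ℝ) ≤ (a:ℝ) := by exact_mod_cast ha
          have hbR : (1:ℝ) ≤ (b:ℝ) := by exact_mod_cast hb
          have hab1 : (1:ℝ) ≤ (a:ℝ) * (b:ℝ) := by nlinarith
          nlinarith [mul_le_mul_of_nonneg_right hab1 hX0.le]
        have hδ2 : (0:ℝ) < 1 + 2/δ := by positivity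
        calc C₀^2 * X ^ (δ/4) * ((1 + 2/δ) * X ^ (δ/2)) * Real.sqrt ((a':ℝ) * (b':ℝ))
            = C₀^2 * (1 + 2/δ) * (X ^ (δ/4) * X ^ (δ/2)) * Real.sqrt ((a':ℝ) * (b':ℝ)) := by
              ring
          _ ≤ C₀^2 * (1 + 2/δ) * ((a:ℝ) * (b:ℝ) * X) ^ δ * Real.sqrt ((a':ℝ) * (b':ℝ)) := by
              apply mul_le_mul_of_nonneg_right _ (Real.sqrt_nonneg _)
              apply mul_le_mul_of_nonneg_left _ (by positivity)
              rw [hXX]; exact le_trans hle1 hle2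
end
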